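/- Let P be the transition matrix of the Jump/Hop chain X_t(n) on Ω_{a,b,c} with strengths 0 < s_A < s_B < s_C, and define the weight w(v) = ∏_{i=1}^{n} s_{v(i)}^{i} for v ∈ Ω_{a,b,c}. Then w satisfies detailed balance: w(v)·P(v,u) = w(u)·P(u,v) for all u, v ∈ Ω_{a,b,c}. Consequently, π(v) = w(v)/∑_{u} w(u) is a reversible (hence stationary) distribution for X_t(n), and it coincides with the stationary distribution of the linear particle system X_3(n) on the same state space. -/

import Mathlib

open Finset

/-- State space `Ω_{n₁,…,n_k}` of the linear particle system: words of length `n`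
over `{1,…,k}` with exactly `cnt j` letters equal to `j`. -/
abbrev PSpace (n k : ℕ) (cnt : Fin k → ℕ) : Type :=
  {w : Fin n → Fin k // ∀ j : Fin k, (Finset.univ.filter fun i => w i = j).card = cnt j}

/-- Transition matrix of the linear particle system `X_k(n)`: from state `v`, a
position `i` with `i+1 < n` is chosen uniformly; if the two letters are equal nothing
happens, otherwise they are swapped with probability `s(v i)/(s(v i)+s(v (i+1)))`. -/
noncomputable def partP (n k : ℕ) (cnt : Fin k → ℕ) (s : Fin k → ℝ) :
    Matrix (PSpace n k cnt) (PSpace n k cnt) ℝ :=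
  fun v u => (1 / ((n : ℝ) - 1)) * ∑ i : Fin n, ∑ j : Fin n,
    if (j : ℕ) = (i : ℕ) + 1 then
      if v.1 i = v.1 j then (if u = v then 1 else 0)
      else
        (s (v.1 i) / (s (v.1 i) + s (v.1 j))) *
          (if u.1 = v.1 ∘ Equiv.swap i j then 1 else 0)
        + (s (v.1 j) / (s (v.1 i) + s (v.1 j))) *
          (if u = v then 1 else 0)
    else 0

/-- Unnormalized stationary weight of the linear particle system:
`w(v) = ∏_i s(v i)^i` (positions counted `1,…,n`). -/
noncomputable def partW (n k : ℕ) (cnt : Fin k → ℕ) (s : Fin k → ℝ)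
    (v : PSpace n k cnt) : ℝ :=
  ∏ i : Fin n, s (v.1 i) ^ ((i : ℕ) + 1)

/-- Stationary distribution of the linear particle system. -/
noncomputable def partPi (n k : ℕ) (cnt : Fin k → ℕ) (s : Fin k → ℝ)
    (v : PSpace n k cnt) : ℝ :=
  partW n k cnt s v / ∑ u : PSpace n k cnt, partW n k cnt s u

/-- Transition matrix of the Jump/Hop chain `X_t(n)` on `Ω_{a,b,c}`; letters of the
alphabet `Fin 3` are `0 = A`, `1 = B`, `2 = C`.  A pair of positions `i < j` is chosen
uniformly at random and a Jump or Hop move is performed when its preconditions hold. -/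
noncomputable def jumpP (a b c : ℕ) (sA sB sC : ℝ) :
    Matrix (PSpace (a + b + c) 3 ![a, b, c]) (PSpace (a + b + c) 3 ![a, b, c]) ℝ :=
  fun v u =>
    (1 / ((a + b + c).choose 2 : ℝ)) *
      ∑ i : Fin (a + b + c), ∑ j : Fin (a + b + c),
        if i < j then
          if ((v.1 i = 0 ∧ v.1 j = 2) ∨ (v.1 i = 2 ∧ v.1 j = 0)) ∧
              (∀ l, i < l → l < j → v.1 l = 1) then
            -- Jump
            ((sC / sA) ^ ((j : ℕ) - (i : ℕ)) / (1 + (sC / sA) ^ ((j : ℕ) - (i : ℕ)))) *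
              (if u.1 = (fun x => if x = i then (0 : Fin 3) else if x = j then 2 else v.1 x)
                then 1 else 0)
            + (1 / (1 + (sC / sA) ^ ((j : ℕ) - (i : ℕ)))) *
              (if u.1 = (fun x => if x = i then (2 : Fin 3) else if x = j then 0 else v.1 x)
                then 1 else 0)
          else if (v.1 i = 0 ∧ ∀ l, i < l → l ≤ j → v.1 l = 1) ∨
                  (v.1 j = 0 ∧ ∀ l, i ≤ l → l < j → v.1 l = 1) then
            -- Hop, A–B case
            ((sB / sA) ^ ((j : ℕ) - (i : ℕ)) / (1 + (sB / sA) ^ ((j : ℕ) - (i : ℕ)))) *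
              (if u.1 = (fun x => if x = i then (0 : Fin 3)
                  else if i ≤ x ∧ x ≤ j then 1 else v.1 x) then 1 else 0)
            + (1 / (1 + (sB / sA) ^ ((j : ℕ) - (i : ℕ)))) *
              (if u.1 = (fun x => if x = j then (0 : Fin 3)
                  else if i ≤ x ∧ x ≤ j then 1 else v.1 x) then 1 else 0)
          else if (v.1 i = 2 ∧ ∀ l, i < l → l ≤ j → v.1 l = 1) ∨
                  (v.1 j = 2 ∧ ∀ l, i ≤ l → l < j → v.1 l = 1) then
            -- Hop, B–C case
            ((sC / sB) ^ ((j : ℕ) - (i : ℕ)) / (1 + (sC / sB) ^ ((j : ℕ) - (i : ℕ)))) *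
              (if u.1 = (fun x => if x = j then (2 : Fin 3)
                  else if i ≤ x ∧ x ≤ j then 1 else v.1 x) then 1 else 0)
            + (1 / (1 + (sC / sB) ^ ((j : ℕ) - (i : ℕ)))) *
              (if u.1 = (fun x => if x = i then (2 : Fin 3)
                  else if i ≤ x ∧ x ≤ j then 1 else v.1 x) then 1 else 0)
          else (if u = v then 1 else 0)
        else 0

section Helpers

variable {n k : ℕ} {cnt : Fin k → ℕ} {s : Fin k → ℝ}

lemma partW_pos (hs : ∀ j, 0 < s j) (v : PSpace n k cnt) : 0 < partW n k cnt s v :=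
  Finset.prod_pos fun i _ => pow_pos (hs _) _

lemma weight_swap (v u : PSpace n k cnt) (i j : Fin n) (hij : i ≠ j)
    (h : ∀ l, l ≠ i → l ≠ j → v.1 l = u.1 l) :
    partW n k cnt s v * s (u.1 i) ^ ((i:ℕ)+1) * s (u.1 j) ^ ((j:ℕ)+1)
      = partW n k cnt s u * s (v.1 i) ^ ((i:ℕ)+1) * s (v.1 j) ^ ((j:ℕ)+1) := by
  have hjmem : j ∈ Finset.univ.erase i := Finset.mem_erase.2 ⟨hij.symm, Finset.mem_univ j⟩
  have hv : partW n k cnt s v = s (v.1 i) ^ ((i:ℕ)+1) * (s (v.1 j) ^ ((j:ℕ)+1) *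
      ∏ l ∈ (Finset.univ.erase i).erase j, s (v.1 l) ^ ((l:ℕ)+1)) := by
    rw [show partW n k cnt s v = ∏ l : Fin n, s (v.1 l) ^ ((l:ℕ)+1) from rfl,
      ← Finset.mul_prod_erase _ _ (Finset.mem_univ i), ← Finset.mul_prod_erase _ _ hjmem]
  have hu : partW n k cnt s u = s (u.1 i) ^ ((i:ℕ)+1) * (s (u.1 j) ^ ((j:ℕ)+1) *
      ∏ l ∈ (Finset.univ.erase i).erase j, s (u.1 l) ^ ((l:ℕ)+1)) := by
    rw [show partW n k cnt s u = ∏ l : Fin n, s (u.1 l) ^ ((l:ℕ)+1) from rfl,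
      ← Finset.mul_prod_erase _ _ (Finset.mem_univ i), ← Finset.mul_prod_erase _ _ hjmem]
  have hrest : ∏ l ∈ (Finset.univ.erase i).erase j, s (v.1 l) ^ ((l:ℕ)+1)
      = ∏ l ∈ (Finset.univ.erase i).erase j, s (u.1 l) ^ ((l:ℕ)+1) := by
    refine Finset.prod_congr rfl fun l hl => ?_
    have h1 := (Finset.mem_erase.1 hl).1
    have h2 := (Finset.mem_erase.1 (Finset.mem_erase.1 hl).2).1
    rw [h l h2 h1]
  rw [hv, hu, hrest]; ring

lemma sum_indicator_state (t : Fin n → Fin k)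
    (v₀ : PSpace n k cnt) (h : v₀.1 = t) (x : ℝ) :
    ∑ v : PSpace n k cnt, (if v.1 = t then x else 0) = x := by
  have he : ∀ v : PSpace n k cnt, (v.1 = t) ↔ (v = v₀) := fun v =>
    ⟨fun h' => Subtype.ext (h'.trans h.symm), fun h' => h' ▸ h⟩
  simp only [he]
  simp

lemma exists_state_comp (u : PSpace n k cnt) (e : Equiv.Perm (Fin n)) :
    ∃ v : PSpace n k cnt, v.1 = u.1 ∘ e := by
  refine ⟨⟨u.1 ∘ e, fun j => ?_⟩, rfl⟩
  rw [← u.2 j]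
  apply Finset.card_bij (fun i _ => e i)
  · intro a ha; simp_all
  · intro a _ b _ hab; exact e.injective hab
  · intro b hb; exact ⟨e.symm b, by simp_all, by simp⟩

lemma ratio_pow_eq {x y : ℝ} (hx : 0 < x) {i j : ℕ} (hij : i ≤ j) :
    x^(i+1) * y^(j+1) = (y/x)^(j-i) * (y^(i+1) * x^(j+1)) := by
  rw [div_pow, div_mul_eq_mul_div, eq_div_iff (pow_ne_zero _ hx.ne')]
  have h1 : (i+1)+(j-i) = j+1 := by omega
  have h2 : (j-i)+(i+1) = j+1 := by omega
  calc x^(i+1) * y^(j+1) * x^(j-i) = y^(j+1) * (x^(i+1) * x^(j-i)) := by ring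
    _ = y^(j+1) * x^(j+1) := by rw [← pow_add, h1]
    _ = (y^(j-i) * y^(i+1)) * x^(j+1) := by rw [← pow_add, h2]
    _ = y^(j-i) * (y^(i+1) * x^(j+1)) * 1 := by ring
    _ = _ := by rw [mul_one]

/-- central arithmetic: if `wv * y^(i+1) * x^(j+1) = wu * x^(i+1) * y^(j+1)` then
detailed balance for the rate `r = (y/x)^(j-i)`. -/
lemma key_arith {wv wu x y : ℝ} (hx : 0 < x) (hy : 0 < y) {i j : ℕ} (hij : i ≤ j)
    (h : wv * y^(i+1) * x^(j+1) = wu * x^(i+1) * y^(j+1)) :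
    wv * (1/(1+(y/x)^(j-i))) = wu * ((y/x)^(j-i)/(1+(y/x)^(j-i))) := by
  set r := (y/x)^(j-i) with hr
  have hrpos : 0 < r := pow_pos (div_pos hy hx) _
  have hne : (1:ℝ) + r ≠ 0 := by positivity
  have hxy : 0 < y^(i+1) * x^(j+1) := by positivity
  have hmain : wv = wu * r := by
    have h2 : wv * (y^(i+1)*x^(j+1)) = (wu*r) * (y^(i+1)*x^(j+1)) := by
      have h3 : wv * (y^(i+1)*x^(j+1)) = wu * (x^(i+1) * y^(j+1)) := by rw [← mul_assoc, h, mul_assoc]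
      rw [h3, ratio_pow_eq hx hij]; ring
    exact mul_right_cancel₀ hxy.ne' h2
  rw [hmain]; field_simp
end Helpers
section Nonempty

lemma pspace_nonempty (a b c : ℕ) : Nonempty (PSpace (a+b+c) 3 ![a,b,c]) := by
  refine ⟨⟨fun i => if (i:ℕ) < a then 0 else if (i:ℕ) < a+b then 1 else 2, fun j => ?_⟩⟩
  have key : ∀ p : ℕ → Prop, ∀ _ : DecidablePred p,
      (Finset.univ.filter fun i : Fin (a+b+c) => p (i:ℕ)).card
        = ((Finset.range (a+b+c)).filter p).card := by
    intro p hp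
    rw [Finset.card_filter, Finset.card_filter]
    exact Fin.sum_univ_eq_sum_range (fun m => if p m then 1 else 0) _
  fin_cases j
  · show (Finset.univ.filter fun i : Fin (a+b+c) =>
        (if (i:ℕ) < a then (0:Fin 3) else if (i:ℕ) < a+b then 1 else 2) = 0).card = a
    have : (Finset.univ.filter fun i : Fin (a+b+c) =>
        (if (i:ℕ) < a then (0:Fin 3) else if (i:ℕ) < a+b then 1 else 2) = 0).card
        = (Finset.univ.filter fun i : Fin (a+b+c) => (i:ℕ) < a).card := by
      congr 1; ext i; simp only [Finset.mem_filter]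
      constructor
      · rintro ⟨h1, h2⟩; refine ⟨h1, ?_⟩; by_contra hc
        simp only [if_neg hc] at h2; split_ifs at h2 <;> simp_all
      · rintro ⟨h1, h2⟩; exact ⟨h1, by rw [if_pos h2]⟩
    rw [this]
    refine Eq.trans (key (fun i => i < a) _) ?_
    have : (Finset.range (a+b+c)).filter (fun i => i < a) = Finset.range a := by
      ext i; simp; omega
    rw [this, Finset.card_range]
  · show (Finset.univ.filter fun i : Fin (a+b+c) =>
        (if (i:ℕ) < a then (0:Fin 3) else if (i:ℕ) < a+b then 1 else 2) = 1).card = b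
    have : (Finset.univ.filter fun i : Fin (a+b+c) =>
        (if (i:ℕ) < a then (0:Fin 3) else if (i:ℕ) < a+b then 1 else 2) = 1).card
        = (Finset.univ.filter fun i : Fin (a+b+c) => a ≤ (i:ℕ) ∧ (i:ℕ) < a+b).card := by
      congr 1; ext i; simp only [Finset.mem_filter]
      constructor
      · rintro ⟨h1, h2⟩; refine ⟨h1, ?_⟩
        split_ifs at h2 with hc1 hc2 <;> first | omega | simp_all
      · rintro ⟨h1, ⟨h2, h3⟩⟩; exact ⟨h1, by rw [if_neg (by omega), if_pos h3]⟩
    rw [this]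
    refine Eq.trans (key (fun i => a ≤ i ∧ i < a+b) _) ?_
    have : (Finset.range (a+b+c)).filter (fun i => a ≤ i ∧ i < a+b)
        = Finset.Ico a (a+b) := by ext i; simp; omega
    rw [this, Nat.card_Ico]; omega
  · show (Finset.univ.filter fun i : Fin (a+b+c) =>
        (if (i:ℕ) < a then (0:Fin 3) else if (i:ℕ) < a+b then 1 else 2) = 2).card = c
    have : (Finset.univ.filter fun i : Fin (a+b+c) =>
        (if (i:ℕ) < a then (0:Fin 3) else if (i:ℕ) < a+b then 1 else 2) = 2).card
        = (Finset.univ.filter fun i : Fin (a+b+c) => a+b ≤ (i:ℕ)).card := by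
      congr 1; ext i; simp only [Finset.mem_filter]
      constructor
      · rintro ⟨h1, h2⟩; refine ⟨h1, ?_⟩
        split_ifs at h2 with hc1 hc2 <;> first | omega | simp_all
      · rintro ⟨h1, h2⟩; exact ⟨h1, by rw [if_neg (by omega), if_neg (by omega)]⟩
    rw [this]
    refine Eq.trans (key (fun i => a+b ≤ i) _) ?_
    have : (Finset.range (a+b+c)).filter (fun i => a+b ≤ i)
        = Finset.Ico (a+b) (a+b+c) := by ext i; simp; omega
    rw [this, Nat.card_Ico]; omega

end Nonempty
section Jump

noncomputable def jumpTerm (a b c : ℕ) (sA sB sC : ℝ)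
    (v u : PSpace (a + b + c) 3 ![a, b, c]) (i j : Fin (a + b + c)) : ℝ :=
        if i < j then
          if ((v.1 i = 0 ∧ v.1 j = 2) ∨ (v.1 i = 2 ∧ v.1 j = 0)) ∧
              (∀ l, i < l → l < j → v.1 l = 1) then
            ((sC / sA) ^ ((j : ℕ) - (i : ℕ)) / (1 + (sC / sA) ^ ((j : ℕ) - (i : ℕ)))) *
              (if u.1 = (fun x => if x = i then (0 : Fin 3) else if x = j then 2 else v.1 x)
                then 1 else 0)
            + (1 / (1 + (sC / sA) ^ ((j : ℕ) - (i : ℕ)))) *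
              (if u.1 = (fun x => if x = i then (2 : Fin 3) else if x = j then 0 else v.1 x)
                then 1 else 0)
          else if (v.1 i = 0 ∧ ∀ l, i < l → l ≤ j → v.1 l = 1) ∨
                  (v.1 j = 0 ∧ ∀ l, i ≤ l → l < j → v.1 l = 1) then
            ((sB / sA) ^ ((j : ℕ) - (i : ℕ)) / (1 + (sB / sA) ^ ((j : ℕ) - (i : ℕ)))) *
              (if u.1 = (fun x => if x = i then (0 : Fin 3)
                  else if i ≤ x ∧ x ≤ j then 1 else v.1 x) then 1 else 0)
            + (1 / (1 + (sB / sA) ^ ((j : ℕ) - (i : ℕ)))) *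
              (if u.1 = (fun x => if x = j then (0 : Fin 3)
                  else if i ≤ x ∧ x ≤ j then 1 else v.1 x) then 1 else 0)
          else if (v.1 i = 2 ∧ ∀ l, i < l → l ≤ j → v.1 l = 1) ∨
                  (v.1 j = 2 ∧ ∀ l, i ≤ l → l < j → v.1 l = 1) then
            ((sC / sB) ^ ((j : ℕ) - (i : ℕ)) / (1 + (sC / sB) ^ ((j : ℕ) - (i : ℕ)))) *
              (if u.1 = (fun x => if x = j then (2 : Fin 3)
                  else if i ≤ x ∧ x ≤ j then 1 else v.1 x) then 1 else 0)
            + (1 / (1 + (sC / sB) ^ ((j : ℕ) - (i : ℕ)))) *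
              (if u.1 = (fun x => if x = i then (2 : Fin 3)
                  else if i ≤ x ∧ x ≤ j then 1 else v.1 x) then 1 else 0)
          else (if u = v then 1 else 0)
        else 0

lemma jumpP_eq (a b c : ℕ) (sA sB sC : ℝ)
    (v u : PSpace (a + b + c) 3 ![a, b, c]) :
    jumpP a b c sA sB sC v u = (1 / ((a + b + c).choose 2 : ℝ)) *
      ∑ i : Fin (a + b + c), ∑ j : Fin (a + b + c), jumpTerm a b c sA sB sC v u i j := rfl

end Jump
section Aux

lemma jumpTerm_db_aux (a b c : ℕ) (sA sB sC : ℝ)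
    (h0 : 0 < sA) (hAB : sA < sB) (hBC : sB < sC)
    (v u : PSpace (a+b+c) 3 ![a,b,c]) (i j : Fin (a+b+c))
    (huv : u ≠ v) (hT : jumpTerm a b c sA sB sC v u i j ≠ 0) :
    partW (a+b+c) 3 ![a,b,c] ![sA,sB,sC] v * jumpTerm a b c sA sB sC v u i j
      = partW (a+b+c) 3 ![a,b,c] ![sA,sB,sC] u * jumpTerm a b c sA sB sC u v i j := by
  have hB : 0 < sB := h0.trans hAB
  have hC : 0 < sC := hB.trans hBC
  by_cases hij : i < j
  case neg =>
    unfold jumpTerm at hT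
    rw [if_neg hij] at hT
    exact absurd rfl hT
  unfold jumpTerm at hT ⊢
  rw [if_pos hij] at hT
  rw [if_pos hij, if_pos hij]
  have hijn : (i:ℕ) ≤ (j:ℕ) := le_of_lt hij
  have hne : i ≠ j := ne_of_lt hij
  have hvne : v.1 ≠ u.1 := fun h => huv (Subtype.ext h.symm)
  by_cases h1 : ((v.1 i = 0 ∧ v.1 j = 2) ∨ (v.1 i = 2 ∧ v.1 j = 0)) ∧
      (∀ l, i < l → l < j → v.1 l = 1)
  · rw [if_pos h1] at hT ⊢
    obtain ⟨h1a, hbet⟩ := h1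
    rcases h1a with ⟨hvi, hvj⟩ | ⟨hvi, hvj⟩
    · -- v i = 0, v j = 2 : the first target equals v
      have ht1 : (fun x => if x = i then (0:Fin 3) else if x = j then 2 else v.1 x) = v.1 := by
        funext x
        by_cases hxi : x = i
        · subst hxi; simp [hvi]
        · by_cases hxj : x = j
          · subst hxj; simp [Ne.symm hne, hvj]
          · simp [hxi, hxj]
      have hind1 : ¬ (u.1 = fun x => if x = i then (0:Fin 3) else if x = j then 2 else v.1 x) := by
        rw [ht1]; exact fun h => huv (Subtype.ext h)
      rw [if_neg hind1] at hT ⊢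
      by_cases hu2 : u.1 = fun x => if x = i then (2:Fin 3) else if x = j then 0 else v.1 x
      case neg => rw [if_neg hu2] at hT; simp at hT
      rw [if_pos hu2]
      have hui : u.1 i = 2 := by simpa using congrFun hu2 i
      have huj : u.1 j = 0 := by simpa [Ne.symm hne] using congrFun hu2 j
      have hout : ∀ x, x ≠ i → x ≠ j → u.1 x = v.1 x := fun x hxi hxj => by
        simpa [hxi, hxj] using congrFun hu2 x
      have hCju : ((u.1 i = 0 ∧ u.1 j = 2) ∨ (u.1 i = 2 ∧ u.1 j = 0)) ∧
          (∀ l, i < l → l < j → u.1 l = 1) :=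
        ⟨Or.inr ⟨hui, huj⟩, fun l hl1 hl2 => by
          rw [hout l hl1.ne' (ne_of_lt hl2)]; exact hbet l hl1 hl2⟩
      rw [if_pos hCju]
      have ht1u : v.1 = (fun x => if x = i then (0:Fin 3) else if x = j then 2 else u.1 x) := by
        funext x
        by_cases hxi : x = i
        · subst hxi; simp [hvi]
        · by_cases hxj : x = j
          · subst hxj; simp [Ne.symm hne, hvj]
          · simp [hxi, hxj, hout x hxi hxj]
      have ht2u : ¬ (v.1 = fun x => if x = i then (2:Fin 3) else if x = j then 0 else u.1 x) := by
        have : (fun x => if x = i then (2:Fin 3) else if x = j then 0 else u.1 x) = u.1 := by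
          funext x
          by_cases hxi : x = i
          · subst hxi; simp [hui]
          · by_cases hxj : x = j
            · subst hxj; simp [Ne.symm hne, huj]
            · simp [hxi, hxj]
        rw [this]; exact hvne
      rw [if_pos ht1u, if_neg ht2u]
      have hw := weight_swap (s := ![sA,sB,sC]) v u i j hne (fun l p1 p2 => (hout l p1 p2).symm)
      rw [hui, huj, hvi, hvj] at hw
      simp only [show (![sA,sB,sC]) 2 = sC from rfl, show (![sA,sB,sC]) 0 = sA from rfl] at hw
      have hk : partW (a+b+c) 3 ![a,b,c] ![sA,sB,sC] v * (1/(1+(sC/sA)^((j:ℕ)-(i:ℕ))))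
          = partW (a+b+c) 3 ![a,b,c] ![sA,sB,sC] u *
            ((sC/sA)^((j:ℕ)-(i:ℕ))/(1+(sC/sA)^((j:ℕ)-(i:ℕ)))) := key_arith h0 hC hijn hw
      linear_combination hk
    · -- v i = 2, v j = 0 : the second target equals v
      have ht2 : (fun x => if x = i then (2:Fin 3) else if x = j then 0 else v.1 x) = v.1 := by
        funext x
        by_cases hxi : x = i
        · subst hxi; simp [hvi]
        · by_cases hxj : x = j
          · subst hxj; simp [Ne.symm hne, hvj]
          · simp [hxi, hxj]
      have hind2 : ¬ (u.1 = fun x => if x = i then (2:Fin 3) else if x = j then 0 else v.1 x) := by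
        rw [ht2]; exact fun h => huv (Subtype.ext h)
      rw [if_neg hind2] at hT ⊢
      by_cases hu1 : u.1 = fun x => if x = i then (0:Fin 3) else if x = j then 2 else v.1 x
      case neg => rw [if_neg hu1] at hT; simp at hT
      rw [if_pos hu1]
      have hui : u.1 i = 0 := by simpa using congrFun hu1 i
      have huj : u.1 j = 2 := by simpa [Ne.symm hne] using congrFun hu1 j
      have hout : ∀ x, x ≠ i → x ≠ j → u.1 x = v.1 x := fun x hxi hxj => by
        simpa [hxi, hxj] using congrFun hu1 x
      have hCju : ((u.1 i = 0 ∧ u.1 j = 2) ∨ (u.1 i = 2 ∧ u.1 j = 0)) ∧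
          (∀ l, i < l → l < j → u.1 l = 1) :=
        ⟨Or.inl ⟨hui, huj⟩, fun l hl1 hl2 => by
          rw [hout l hl1.ne' (ne_of_lt hl2)]; exact hbet l hl1 hl2⟩
      rw [if_pos hCju]
      have ht1u : ¬ (v.1 = fun x => if x = i then (0:Fin 3) else if x = j then 2 else u.1 x) := by
        have : (fun x => if x = i then (0:Fin 3) else if x = j then 2 else u.1 x) = u.1 := by
          funext x
          by_cases hxi : x = i
          · subst hxi; simp [hui]
          · by_cases hxj : x = j
            · subst hxj; simp [Ne.symm hne, huj]
            · simp [hxi, hxj]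
        rw [this]; exact hvne
      have ht2u : v.1 = (fun x => if x = i then (2:Fin 3) else if x = j then 0 else u.1 x) := by
        funext x
        by_cases hxi : x = i
        · subst hxi; simp [hvi]
        · by_cases hxj : x = j
          · subst hxj; simp [Ne.symm hne, hvj]
          · simp [hxi, hxj, hout x hxi hxj]
      rw [if_neg ht1u, if_pos ht2u]
      have hw := weight_swap (s := ![sA,sB,sC]) u v i j hne hout
      rw [hui, huj, hvi, hvj] at hw
      simp only [show (![sA,sB,sC]) 2 = sC from rfl, show (![sA,sB,sC]) 0 = sA from rfl] at hw
      have hk : partW (a+b+c) 3 ![a,b,c] ![sA,sB,sC] u * (1/(1+(sC/sA)^((j:ℕ)-(i:ℕ))))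
          = partW (a+b+c) 3 ![a,b,c] ![sA,sB,sC] v *
            ((sC/sA)^((j:ℕ)-(i:ℕ))/(1+(sC/sA)^((j:ℕ)-(i:ℕ)))) := key_arith h0 hC hijn hw
      linear_combination -hk
  · rw [if_neg h1] at hT ⊢
    by_cases h2 : (v.1 i = 0 ∧ ∀ l, i < l → l ≤ j → v.1 l = 1) ∨
        (v.1 j = 0 ∧ ∀ l, i ≤ l → l < j → v.1 l = 1)
    · rw [if_pos h2] at hT ⊢
      rcases h2 with ⟨hvi, hbet⟩ | ⟨hvj, hbet⟩
      · -- hop A-B, case (a): v i = 0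
        have hvj1 : v.1 j = 1 := hbet j hij (le_refl j)
        have ht1 : (fun x => if x = i then (0:Fin 3) else if i ≤ x ∧ x ≤ j then 1 else v.1 x)
            = v.1 := by
          funext x
          by_cases hxi : x = i
          · subst hxi; simp [hvi]
          · by_cases hxr : i ≤ x ∧ x ≤ j
            · have hx1 : i < x := lt_of_le_of_ne hxr.1 (fun h => hxi h.symm)
              simp [hxi, hxr, (hbet x hx1 hxr.2).symm]
            · simp [hxi, hxr]
        have hind1 : ¬ (u.1 = fun x => if x = i then (0:Fin 3)
            else if i ≤ x ∧ x ≤ j then 1 else v.1 x) := by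
          rw [ht1]; exact fun h => huv (Subtype.ext h)
        rw [if_neg hind1] at hT ⊢
        by_cases hu2 : u.1 = fun x => if x = j then (0:Fin 3)
            else if i ≤ x ∧ x ≤ j then 1 else v.1 x
        case neg => rw [if_neg hu2] at hT; simp at hT
        rw [if_pos hu2]
        have huj : u.1 j = 0 := by simpa using congrFun hu2 j
        have huin : ∀ x, i ≤ x → x < j → u.1 x = 1 := fun x p1 p2 => by
          simpa [ne_of_lt p2, p1, le_of_lt p2] using congrFun hu2 x
        have hui : u.1 i = 1 := huin i (le_refl i) hij
        have hout : ∀ x, x ≠ i → x ≠ j → u.1 x = v.1 x := fun x hxi hxj => by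
          by_cases hxr : i ≤ x ∧ x ≤ j
          · have hx1 : i < x := lt_of_le_of_ne hxr.1 (fun h => hxi h.symm)
            have hx2 : x < j := lt_of_le_of_ne hxr.2 hxj
            rw [huin x (le_of_lt hx1) hx2, hbet x hx1 (le_of_lt hx2)]
          · simpa [hxj, hxr] using congrFun hu2 x
        have hnj : ¬ (((u.1 i = 0 ∧ u.1 j = 2) ∨ (u.1 i = 2 ∧ u.1 j = 0)) ∧
            (∀ l, i < l → l < j → u.1 l = 1)) := by
          rintro ⟨⟨hq, -⟩ | ⟨hq, -⟩, -⟩ <;> rw [hui] at hq <;> exact absurd hq (by decide)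
        have hCAu : (u.1 i = 0 ∧ ∀ l, i < l → l ≤ j → u.1 l = 1) ∨
            (u.1 j = 0 ∧ ∀ l, i ≤ l → l < j → u.1 l = 1) :=
          Or.inr ⟨huj, fun l p1 p2 => huin l p1 p2⟩
        rw [if_neg hnj, if_pos hCAu]
        have ht1u : v.1 = (fun x => if x = i then (0:Fin 3)
            else if i ≤ x ∧ x ≤ j then 1 else u.1 x) := by
          funext x
          by_cases hxi : x = i
          · subst hxi; simp [hvi]
          · by_cases hxr : i ≤ x ∧ x ≤ j
            · have hx1 : i < x := lt_of_le_of_ne hxr.1 (fun h => hxi h.symm)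
              simp [hxi, hxr, hbet x hx1 hxr.2]
            · have hxj : x ≠ j := by intro h; subst h; exact hxr ⟨le_of_lt hij, le_refl x⟩
              simp [hxi, hxr, (hout x hxi hxj).symm]
        have ht2u : ¬ (v.1 = fun x => if x = j then (0:Fin 3)
            else if i ≤ x ∧ x ≤ j then 1 else u.1 x) := by
          have heq : (fun x => if x = j then (0:Fin 3)
              else if i ≤ x ∧ x ≤ j then 1 else u.1 x) = u.1 := by
            funext x
            by_cases hxj : x = j
            · subst hxj; simp [huj]
            · by_cases hxr : i ≤ x ∧ x ≤ j
              · have hx2 : x < j := lt_of_le_of_ne hxr.2 hxj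
                simp [hxj, hxr, (huin x hxr.1 hx2).symm]
              · simp [hxj, hxr]
          rw [heq]; exact hvne
        rw [if_pos ht1u, if_neg ht2u]
        have hw := weight_swap (s := ![sA,sB,sC]) v u i j hne
          (fun l p1 p2 => (hout l p1 p2).symm)
        rw [hui, huj, hvi, hvj1] at hw
        simp only [show (![sA,sB,sC]) 1 = sB from rfl, show (![sA,sB,sC]) 0 = sA from rfl] at hw
        have hk : partW (a+b+c) 3 ![a,b,c] ![sA,sB,sC] v * (1/(1+(sB/sA)^((j:ℕ)-(i:ℕ))))
            = partW (a+b+c) 3 ![a,b,c] ![sA,sB,sC] u *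
              ((sB/sA)^((j:ℕ)-(i:ℕ))/(1+(sB/sA)^((j:ℕ)-(i:ℕ)))) := key_arith h0 hB hijn hw
        linear_combination hk
      · -- hop A-B, case (b): v j = 0
        have hvi1 : v.1 i = 1 := hbet i (le_refl i) hij
        have ht2 : (fun x => if x = j then (0:Fin 3) else if i ≤ x ∧ x ≤ j then 1 else v.1 x)
            = v.1 := by
          funext x
          by_cases hxj : x = j
          · subst hxj; simp [hvj]
          · by_cases hxr : i ≤ x ∧ x ≤ j
            · have hx2 : x < j := lt_of_le_of_ne hxr.2 hxj
              simp [hxj, hxr, (hbet x hxr.1 hx2).symm]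
            · simp [hxj, hxr]
        have hind2 : ¬ (u.1 = fun x => if x = j then (0:Fin 3)
            else if i ≤ x ∧ x ≤ j then 1 else v.1 x) := by
          rw [ht2]; exact fun h => huv (Subtype.ext h)
        rw [if_neg hind2] at hT ⊢
        by_cases hu1 : u.1 = fun x => if x = i then (0:Fin 3)
            else if i ≤ x ∧ x ≤ j then 1 else v.1 x
        case neg => rw [if_neg hu1] at hT; simp at hT
        rw [if_pos hu1]
        have hui : u.1 i = 0 := by simpa using congrFun hu1 i
        have huin : ∀ x, i < x → x ≤ j → u.1 x = 1 := fun x p1 p2 => by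
          simpa [p1.ne', le_of_lt p1, p2] using congrFun hu1 x
        have huj1 : u.1 j = 1 := huin j hij (le_refl j)
        have hout : ∀ x, x ≠ i → x ≠ j → u.1 x = v.1 x := fun x hxi hxj => by
          by_cases hxr : i ≤ x ∧ x ≤ j
          · have hx1 : i < x := lt_of_le_of_ne hxr.1 (fun h => hxi h.symm)
            have hx2 : x < j := lt_of_le_of_ne hxr.2 hxj
            rw [huin x hx1 hxr.2, hbet x hxr.1 hx2]
          · simpa [hxi, hxr] using congrFun hu1 x
        have hnj : ¬ (((u.1 i = 0 ∧ u.1 j = 2) ∨ (u.1 i = 2 ∧ u.1 j = 0)) ∧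
            (∀ l, i < l → l < j → u.1 l = 1)) := by
          rintro ⟨⟨-, hq⟩ | ⟨hq, -⟩, -⟩
          · rw [huj1] at hq; exact absurd hq (by decide)
          · rw [hui] at hq; exact absurd hq (by decide)
        have hCAu : (u.1 i = 0 ∧ ∀ l, i < l → l ≤ j → u.1 l = 1) ∨
            (u.1 j = 0 ∧ ∀ l, i ≤ l → l < j → u.1 l = 1) :=
          Or.inl ⟨hui, fun l p1 p2 => huin l p1 p2⟩
        rw [if_neg hnj, if_pos hCAu]
        have ht1u : ¬ (v.1 = fun x => if x = i then (0:Fin 3)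
            else if i ≤ x ∧ x ≤ j then 1 else u.1 x) := by
          have heq : (fun x => if x = i then (0:Fin 3)
              else if i ≤ x ∧ x ≤ j then 1 else u.1 x) = u.1 := by
            funext x
            by_cases hxi : x = i
            · subst hxi; simp [hui]
            · by_cases hxr : i ≤ x ∧ x ≤ j
              · have hx1 : i < x := lt_of_le_of_ne hxr.1 (fun h => hxi h.symm)
                simp [hxi, hxr, (huin x hx1 hxr.2).symm]
              · simp [hxi, hxr]
          rw [heq]; exact hvne
        have ht2u : v.1 = (fun x => if x = j then (0:Fin 3)
            else if i ≤ x ∧ x ≤ j then 1 else u.1 x) := by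
          funext x
          by_cases hxj : x = j
          · subst hxj; simp [hvj]
          · by_cases hxr : i ≤ x ∧ x ≤ j
            · have hx2 : x < j := lt_of_le_of_ne hxr.2 hxj
              simp [hxj, hxr, hbet x hxr.1 hx2]
            · have hxi : x ≠ i := by intro h; subst h; exact hxr ⟨le_refl x, le_of_lt hij⟩
              simp [hxj, hxr, (hout x hxi hxj).symm]
        rw [if_neg ht1u, if_pos ht2u]
        have hw := weight_swap (s := ![sA,sB,sC]) u v i j hne hout
        rw [hui, huj1, hvi1, hvj] at hw
        simp only [show (![sA,sB,sC]) 1 = sB from rfl, show (![sA,sB,sC]) 0 = sA from rfl] at hw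
        have hk : partW (a+b+c) 3 ![a,b,c] ![sA,sB,sC] u * (1/(1+(sB/sA)^((j:ℕ)-(i:ℕ))))
            = partW (a+b+c) 3 ![a,b,c] ![sA,sB,sC] v *
              ((sB/sA)^((j:ℕ)-(i:ℕ))/(1+(sB/sA)^((j:ℕ)-(i:ℕ)))) := key_arith h0 hB hijn hw
        linear_combination -hk
    · rw [if_neg h2] at hT ⊢
      by_cases h3 : (v.1 i = 2 ∧ ∀ l, i < l → l ≤ j → v.1 l = 1) ∨
          (v.1 j = 2 ∧ ∀ l, i ≤ l → l < j → v.1 l = 1)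
      · rw [if_pos h3] at hT ⊢
        rcases h3 with ⟨hvi, hbet⟩ | ⟨hvj, hbet⟩
        · -- hop B-C, case (a): v i = 2, so the i-target equals v
          have hvj1 : v.1 j = 1 := hbet j hij (le_refl j)
          have ht2 : (fun x => if x = i then (2:Fin 3) else if i ≤ x ∧ x ≤ j then 1 else v.1 x)
              = v.1 := by
            funext x
            by_cases hxi : x = i
            · subst hxi; simp [hvi]
            · by_cases hxr : i ≤ x ∧ x ≤ j
              · have hx1 : i < x := lt_of_le_of_ne hxr.1 (fun h => hxi h.symm)
                simp [hxi, hxr, (hbet x hx1 hxr.2).symm]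
              · simp [hxi, hxr]
          have hind2 : ¬ (u.1 = fun x => if x = i then (2:Fin 3)
              else if i ≤ x ∧ x ≤ j then 1 else v.1 x) := by
            rw [ht2]; exact fun h => huv (Subtype.ext h)
          rw [if_neg hind2] at hT ⊢
          by_cases hu1 : u.1 = fun x => if x = j then (2:Fin 3)
              else if i ≤ x ∧ x ≤ j then 1 else v.1 x
          case neg => rw [if_neg hu1] at hT; simp at hT
          rw [if_pos hu1]
          have huj : u.1 j = 2 := by simpa using congrFun hu1 j
          have huin : ∀ x, i ≤ x → x < j → u.1 x = 1 := fun x p1 p2 => by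
            simpa [ne_of_lt p2, p1, le_of_lt p2] using congrFun hu1 x
          have hui : u.1 i = 1 := huin i (le_refl i) hij
          have hout : ∀ x, x ≠ i → x ≠ j → u.1 x = v.1 x := fun x hxi hxj => by
            by_cases hxr : i ≤ x ∧ x ≤ j
            · have hx1 : i < x := lt_of_le_of_ne hxr.1 (fun h => hxi h.symm)
              have hx2 : x < j := lt_of_le_of_ne hxr.2 hxj
              rw [huin x (le_of_lt hx1) hx2, hbet x hx1 (le_of_lt hx2)]
            · simpa [hxj, hxr] using congrFun hu1 x
          have hnj : ¬ (((u.1 i = 0 ∧ u.1 j = 2) ∨ (u.1 i = 2 ∧ u.1 j = 0)) ∧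
              (∀ l, i < l → l < j → u.1 l = 1)) := by
            rintro ⟨⟨hq, -⟩ | ⟨hq, -⟩, -⟩ <;> rw [hui] at hq <;> exact absurd hq (by decide)
          have hnA : ¬ ((u.1 i = 0 ∧ ∀ l, i < l → l ≤ j → u.1 l = 1) ∨
              (u.1 j = 0 ∧ ∀ l, i ≤ l → l < j → u.1 l = 1)) := by
            rintro (⟨hq, -⟩ | ⟨hq, -⟩)
            · rw [hui] at hq; exact absurd hq (by decide)
            · rw [huj] at hq; exact absurd hq (by decide)
          have hCCu : (u.1 i = 2 ∧ ∀ l, i < l → l ≤ j → u.1 l = 1) ∨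
              (u.1 j = 2 ∧ ∀ l, i ≤ l → l < j → u.1 l = 1) :=
            Or.inr ⟨huj, fun l p1 p2 => huin l p1 p2⟩
          rw [if_neg hnj, if_neg hnA, if_pos hCCu]
          have htju : ¬ (v.1 = fun x => if x = j then (2:Fin 3)
              else if i ≤ x ∧ x ≤ j then 1 else u.1 x) := by
            have heq : (fun x => if x = j then (2:Fin 3)
                else if i ≤ x ∧ x ≤ j then 1 else u.1 x) = u.1 := by
              funext x
              by_cases hxj : x = j
              · subst hxj; simp [huj]
              · by_cases hxr : i ≤ x ∧ x ≤ j
                · have hx2 : x < j := lt_of_le_of_ne hxr.2 hxj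
                  simp [hxj, hxr, (huin x hxr.1 hx2).symm]
                · simp [hxj, hxr]
            rw [heq]; exact hvne
          have htiu : v.1 = (fun x => if x = i then (2:Fin 3)
              else if i ≤ x ∧ x ≤ j then 1 else u.1 x) := by
            funext x
            by_cases hxi : x = i
            · subst hxi; simp [hvi]
            · by_cases hxr : i ≤ x ∧ x ≤ j
              · have hx1 : i < x := lt_of_le_of_ne hxr.1 (fun h => hxi h.symm)
                simp [hxi, hxr, hbet x hx1 hxr.2]
              · have hxj : x ≠ j := by intro h; subst h; exact hxr ⟨le_of_lt hij, le_refl x⟩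
                simp [hxi, hxr, (hout x hxi hxj).symm]
          rw [if_neg htju, if_pos htiu]
          have hw := weight_swap (s := ![sA,sB,sC]) u v i j hne hout
          rw [hui, huj, hvi, hvj1] at hw
          simp only [show (![sA,sB,sC]) 1 = sB from rfl, show (![sA,sB,sC]) 2 = sC from rfl] at hw
          have hk : partW (a+b+c) 3 ![a,b,c] ![sA,sB,sC] u * (1/(1+(sC/sB)^((j:ℕ)-(i:ℕ))))
              = partW (a+b+c) 3 ![a,b,c] ![sA,sB,sC] v *
                ((sC/sB)^((j:ℕ)-(i:ℕ))/(1+(sC/sB)^((j:ℕ)-(i:ℕ)))) := key_arith hB hC hijn hw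
          linear_combination -hk
        · -- hop B-C, case (b): v j = 2, so the j-target equals v
          have hvi1 : v.1 i = 1 := hbet i (le_refl i) hij
          have htj : (fun x => if x = j then (2:Fin 3) else if i ≤ x ∧ x ≤ j then 1 else v.1 x)
              = v.1 := by
            funext x
            by_cases hxj : x = j
            · subst hxj; simp [hvj]
            · by_cases hxr : i ≤ x ∧ x ≤ j
              · have hx2 : x < j := lt_of_le_of_ne hxr.2 hxj
                simp [hxj, hxr, (hbet x hxr.1 hx2).symm]
              · simp [hxj, hxr]
          have hindj : ¬ (u.1 = fun x => if x = j then (2:Fin 3)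
              else if i ≤ x ∧ x ≤ j then 1 else v.1 x) := by
            rw [htj]; exact fun h => huv (Subtype.ext h)
          rw [if_neg hindj] at hT ⊢
          by_cases hu1 : u.1 = fun x => if x = i then (2:Fin 3)
              else if i ≤ x ∧ x ≤ j then 1 else v.1 x
          case neg => rw [if_neg hu1] at hT; simp at hT
          rw [if_pos hu1]
          have hui : u.1 i = 2 := by simpa using congrFun hu1 i
          have huin : ∀ x, i < x → x ≤ j → u.1 x = 1 := fun x p1 p2 => by
            simpa [p1.ne', le_of_lt p1, p2] using congrFun hu1 x
          have huj1 : u.1 j = 1 := huin j hij (le_refl j)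
          have hout : ∀ x, x ≠ i → x ≠ j → u.1 x = v.1 x := fun x hxi hxj => by
            by_cases hxr : i ≤ x ∧ x ≤ j
            · have hx1 : i < x := lt_of_le_of_ne hxr.1 (fun h => hxi h.symm)
              have hx2 : x < j := lt_of_le_of_ne hxr.2 hxj
              rw [huin x hx1 hxr.2, hbet x hxr.1 hx2]
            · simpa [hxi, hxr] using congrFun hu1 x
          have hnj : ¬ (((u.1 i = 0 ∧ u.1 j = 2) ∨ (u.1 i = 2 ∧ u.1 j = 0)) ∧
              (∀ l, i < l → l < j → u.1 l = 1)) := by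
            rintro ⟨⟨hq, -⟩ | ⟨-, hq⟩, -⟩
            · rw [hui] at hq; exact absurd hq (by decide)
            · rw [huj1] at hq; exact absurd hq (by decide)
          have hnA : ¬ ((u.1 i = 0 ∧ ∀ l, i < l → l ≤ j → u.1 l = 1) ∨
              (u.1 j = 0 ∧ ∀ l, i ≤ l → l < j → u.1 l = 1)) := by
            rintro (⟨hq, -⟩ | ⟨hq, -⟩)
            · rw [hui] at hq; exact absurd hq (by decide)
            · rw [huj1] at hq; exact absurd hq (by decide)
          have hCCu : (u.1 i = 2 ∧ ∀ l, i < l → l ≤ j → u.1 l = 1) ∨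
              (u.1 j = 2 ∧ ∀ l, i ≤ l → l < j → u.1 l = 1) :=
            Or.inl ⟨hui, fun l p1 p2 => huin l p1 p2⟩
          rw [if_neg hnj, if_neg hnA, if_pos hCCu]
          have htju : v.1 = (fun x => if x = j then (2:Fin 3)
              else if i ≤ x ∧ x ≤ j then 1 else u.1 x) := by
            funext x
            by_cases hxj : x = j
            · subst hxj; simp [hvj]
            · by_cases hxr : i ≤ x ∧ x ≤ j
              · have hx2 : x < j := lt_of_le_of_ne hxr.2 hxj
                simp [hxj, hxr, hbet x hxr.1 hx2]
              · have hxi : x ≠ i := by intro h; subst h; exact hxr ⟨le_refl x, le_of_lt hij⟩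
                simp [hxj, hxr, (hout x hxi hxj).symm]
          have htiu : ¬ (v.1 = fun x => if x = i then (2:Fin 3)
              else if i ≤ x ∧ x ≤ j then 1 else u.1 x) := by
            have heq : (fun x => if x = i then (2:Fin 3)
                else if i ≤ x ∧ x ≤ j then 1 else u.1 x) = u.1 := by
              funext x
              by_cases hxi : x = i
              · subst hxi; simp [hui]
              · by_cases hxr : i ≤ x ∧ x ≤ j
                · have hx1 : i < x := lt_of_le_of_ne hxr.1 (fun h => hxi h.symm)
                  simp [hxi, hxr, (huin x hx1 hxr.2).symm]
                · simp [hxi, hxr]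
            rw [heq]; exact hvne
          rw [if_pos htju, if_neg htiu]
          have hw := weight_swap (s := ![sA,sB,sC]) v u i j hne
            (fun l p1 p2 => (hout l p1 p2).symm)
          rw [hui, huj1, hvi1, hvj] at hw
          simp only [show (![sA,sB,sC]) 1 = sB from rfl, show (![sA,sB,sC]) 2 = sC from rfl] at hw
          have hk : partW (a+b+c) 3 ![a,b,c] ![sA,sB,sC] v * (1/(1+(sC/sB)^((j:ℕ)-(i:ℕ))))
              = partW (a+b+c) 3 ![a,b,c] ![sA,sB,sC] u *
                ((sC/sB)^((j:ℕ)-(i:ℕ))/(1+(sC/sB)^((j:ℕ)-(i:ℕ)))) := key_arith hB hC hijn hw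
          linear_combination hk
      · rw [if_neg h3] at hT
        rw [if_neg huv] at hT
        exact absurd rfl hT

end Aux
section Combine

lemma jumpTerm_db (a b c : ℕ) (sA sB sC : ℝ)
    (h0 : 0 < sA) (hAB : sA < sB) (hBC : sB < sC)
    (v u : PSpace (a+b+c) 3 ![a,b,c]) (i j : Fin (a+b+c)) :
    partW (a+b+c) 3 ![a,b,c] ![sA,sB,sC] v * jumpTerm a b c sA sB sC v u i j
      = partW (a+b+c) 3 ![a,b,c] ![sA,sB,sC] u * jumpTerm a b c sA sB sC u v i j := by
  by_cases huv : u = v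
  · subst huv; rfl
  by_cases h1 : jumpTerm a b c sA sB sC v u i j = 0
  · by_cases h2 : jumpTerm a b c sA sB sC u v i j = 0
    · rw [h1, h2, mul_zero, mul_zero]
    · exact (jumpTerm_db_aux a b c sA sB sC h0 hAB hBC u v i j (fun h => huv h.symm) h2).symm
  · exact jumpTerm_db_aux a b c sA sB sC h0 hAB hBC v u i j huv h1

lemma jump_db (a b c : ℕ) (sA sB sC : ℝ)
    (h0 : 0 < sA) (hAB : sA < sB) (hBC : sB < sC)
    (v u : PSpace (a+b+c) 3 ![a,b,c]) :
    partW (a+b+c) 3 ![a,b,c] ![sA,sB,sC] v * jumpP a b c sA sB sC v u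
      = partW (a+b+c) 3 ![a,b,c] ![sA,sB,sC] u * jumpP a b c sA sB sC u v := by
  rw [jumpP_eq, jumpP_eq, mul_left_comm, mul_left_comm (partW (a+b+c) 3 ![a,b,c] ![sA,sB,sC] u)]
  congr 1
  rw [Finset.mul_sum, Finset.mul_sum]
  refine Finset.sum_congr rfl fun i _ => ?_
  rw [Finset.mul_sum, Finset.mul_sum]
  exact Finset.sum_congr rfl fun j _ => jumpTerm_db a b c sA sB sC h0 hAB hBC v u i j

end Combine
section RowSum

lemma coef_sum {r : ℝ} (hr : 0 < r) : r/(1+r) * 1 + 1/(1+r) * 1 = 1 := by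
  have h : (1:ℝ)+r ≠ 0 := by positivity
  field_simp
  ring

lemma pair_count (n : ℕ) :
    (∑ i : Fin n, ∑ j : Fin n, if i < j then (1:ℝ) else 0) = (n.choose 2 : ℕ) := by
  rw [Finset.sum_comm]
  have h1 : ∀ j : Fin n, ∑ i : Fin n, (if i < j then (1:ℝ) else 0) = ((j:ℕ):ℝ) := by
    intro j
    rw [Finset.sum_ite, Finset.sum_const_zero, Finset.sum_const, add_zero, nsmul_eq_mul, mul_one]
    norm_cast
    have : Finset.univ.filter (fun i => i < j) = Finset.Iio j := by ext x; simp
    rw [this, Fin.card_Iio]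
  simp only [h1]
  rw [Fin.sum_univ_eq_sum_range (fun i => (i:ℝ)) n, ← Nat.cast_sum,
    Finset.sum_range_id, Nat.choose_two_right]

lemma jumpTerm_rowsum (a b c : ℕ) (sA sB sC : ℝ)
    (h0 : 0 < sA) (hAB : sA < sB) (hBC : sB < sC)
    (v : PSpace (a+b+c) 3 ![a,b,c]) (i j : Fin (a+b+c)) :
    ∑ u : PSpace (a+b+c) 3 ![a,b,c], jumpTerm a b c sA sB sC v u i j
      = if i < j then 1 else 0 := by
  have hB : 0 < sB := h0.trans hAB
  have hC : 0 < sC := hB.trans hBC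
  by_cases hij : i < j
  case neg => simp [jumpTerm, hij]
  rw [if_pos hij]
  have hne : i ≠ j := ne_of_lt hij
  obtain ⟨vs, hvs⟩ := exists_state_comp v (Equiv.swap i j)
  simp only [jumpTerm, if_pos hij]
  by_cases h1 : ((v.1 i = 0 ∧ v.1 j = 2) ∨ (v.1 i = 2 ∧ v.1 j = 0)) ∧
      (∀ l, i < l → l < j → v.1 l = 1)
  · simp only [if_pos h1]
    rw [Finset.sum_add_distrib, ← Finset.mul_sum, ← Finset.mul_sum]
    obtain ⟨h1a, hbet⟩ := h1
    rcases h1a with ⟨hvi, hvj⟩ | ⟨hvi, hvj⟩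
    · have ht1 : v.1 = (fun x => if x = i then (0:Fin 3) else if x = j then 2 else v.1 x) := by
        funext x
        by_cases hxi : x = i
        · subst hxi; simp [hvi]
        · by_cases hxj : x = j
          · subst hxj; simp [Ne.symm hne, hvj]
          · simp [hxi, hxj]
      have ht2 : vs.1 = (fun x => if x = i then (2:Fin 3) else if x = j then 0 else v.1 x) := by
        rw [hvs]; funext x
        by_cases hxi : x = i
        · subst hxi; simp [Equiv.swap_apply_left, hvj]
        · by_cases hxj : x = j
          · subst hxj; simp [Ne.symm hne, Equiv.swap_apply_right, hvi]
          · simp [hxi, hxj, Equiv.swap_apply_of_ne_of_ne hxi hxj]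
      rw [sum_indicator_state _ v ht1, sum_indicator_state _ vs ht2]
      exact coef_sum (pow_pos (div_pos hC h0) _)
    · have ht2 : v.1 = (fun x => if x = i then (2:Fin 3) else if x = j then 0 else v.1 x) := by
        funext x
        by_cases hxi : x = i
        · subst hxi; simp [hvi]
        · by_cases hxj : x = j
          · subst hxj; simp [Ne.symm hne, hvj]
          · simp [hxi, hxj]
      have ht1 : vs.1 = (fun x => if x = i then (0:Fin 3) else if x = j then 2 else v.1 x) := by
        rw [hvs]; funext x
        by_cases hxi : x = i
        · subst hxi; simp [Equiv.swap_apply_left, hvj]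
        · by_cases hxj : x = j
          · subst hxj; simp [Ne.symm hne, Equiv.swap_apply_right, hvi]
          · simp [hxi, hxj, Equiv.swap_apply_of_ne_of_ne hxi hxj]
      rw [sum_indicator_state _ vs ht1, sum_indicator_state _ v ht2]
      exact coef_sum (pow_pos (div_pos hC h0) _)
  · simp only [if_neg h1]
    by_cases h2 : (v.1 i = 0 ∧ ∀ l, i < l → l ≤ j → v.1 l = 1) ∨
        (v.1 j = 0 ∧ ∀ l, i ≤ l → l < j → v.1 l = 1)
    · simp only [if_pos h2]
      rw [Finset.sum_add_distrib, ← Finset.mul_sum, ← Finset.mul_sum]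
      rcases h2 with ⟨hvi, hbet⟩ | ⟨hvj, hbet⟩
      · have hvj1 : v.1 j = 1 := hbet j hij (le_refl j)
        have ht1 : v.1 = (fun x => if x = i then (0:Fin 3)
            else if i ≤ x ∧ x ≤ j then 1 else v.1 x) := by
          funext x
          by_cases hxi : x = i
          · subst hxi; simp [hvi]
          · by_cases hxr : i ≤ x ∧ x ≤ j
            · have hx1 : i < x := lt_of_le_of_ne hxr.1 (fun h => hxi h.symm)
              simp [hxi, hxr, hbet x hx1 hxr.2]
            · simp [hxi, hxr]
        have ht2 : vs.1 = (fun x => if x = j then (0:Fin 3)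
            else if i ≤ x ∧ x ≤ j then 1 else v.1 x) := by
          rw [hvs]; funext x
          by_cases hxj : x = j
          · subst hxj; simp [Equiv.swap_apply_right, hvi]
          · by_cases hxi : x = i
            · subst hxi
              simp [Equiv.swap_apply_left, hvj1, hxj, le_refl, le_of_lt hij]
            · rw [Function.comp_apply, Equiv.swap_apply_of_ne_of_ne hxi hxj]
              by_cases hxr : i ≤ x ∧ x ≤ j
              · have hx1 : i < x := lt_of_le_of_ne hxr.1 (fun h => hxi h.symm)
                simp [Function.comp, Equiv.swap_apply_of_ne_of_ne hxi hxj, hxj, hxr,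
                  hbet x hx1 hxr.2]
              · simp [Function.comp, Equiv.swap_apply_of_ne_of_ne hxi hxj, hxj, hxr]
        rw [sum_indicator_state _ v ht1, sum_indicator_state _ vs ht2]
        exact coef_sum (pow_pos (div_pos hB h0) _)
      · have hvi1 : v.1 i = 1 := hbet i (le_refl i) hij
        have ht2 : v.1 = (fun x => if x = j then (0:Fin 3)
            else if i ≤ x ∧ x ≤ j then 1 else v.1 x) := by
          funext x
          by_cases hxj : x = j
          · subst hxj; simp [hvj]
          · by_cases hxr : i ≤ x ∧ x ≤ j
            · have hx2 : x < j := lt_of_le_of_ne hxr.2 hxj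
              simp [hxj, hxr, hbet x hxr.1 hx2]
            · simp [hxj, hxr]
        have ht1 : vs.1 = (fun x => if x = i then (0:Fin 3)
            else if i ≤ x ∧ x ≤ j then 1 else v.1 x) := by
          rw [hvs]; funext x
          by_cases hxi : x = i
          · subst hxi; simp [Equiv.swap_apply_left, hvj]
          · by_cases hxj : x = j
            · subst hxj
              simp [Equiv.swap_apply_right, hvi1, hxi, le_refl, le_of_lt hij]
            · by_cases hxr : i ≤ x ∧ x ≤ j
              · have hx2 : x < j := lt_of_le_of_ne hxr.2 hxj
                simp [Function.comp, Equiv.swap_apply_of_ne_of_ne hxi hxj, hxi, hxr,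
                  hbet x hxr.1 hx2]
              · simp [Function.comp, Equiv.swap_apply_of_ne_of_ne hxi hxj, hxi, hxr]
        rw [sum_indicator_state _ vs ht1, sum_indicator_state _ v ht2]
        exact coef_sum (pow_pos (div_pos hB h0) _)
    · simp only [if_neg h2]
      by_cases h3 : (v.1 i = 2 ∧ ∀ l, i < l → l ≤ j → v.1 l = 1) ∨
          (v.1 j = 2 ∧ ∀ l, i ≤ l → l < j → v.1 l = 1)
      · simp only [if_pos h3]
        rw [Finset.sum_add_distrib, ← Finset.mul_sum, ← Finset.mul_sum]
        rcases h3 with ⟨hvi, hbet⟩ | ⟨hvj, hbet⟩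
        · have hvj1 : v.1 j = 1 := hbet j hij (le_refl j)
          have hti : v.1 = (fun x => if x = i then (2:Fin 3)
              else if i ≤ x ∧ x ≤ j then 1 else v.1 x) := by
            funext x
            by_cases hxi : x = i
            · subst hxi; simp [hvi]
            · by_cases hxr : i ≤ x ∧ x ≤ j
              · have hx1 : i < x := lt_of_le_of_ne hxr.1 (fun h => hxi h.symm)
                simp [hxi, hxr, hbet x hx1 hxr.2]
              · simp [hxi, hxr]
          have htj : vs.1 = (fun x => if x = j then (2:Fin 3)
              else if i ≤ x ∧ x ≤ j then 1 else v.1 x) := by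
            rw [hvs]; funext x
            by_cases hxj : x = j
            · subst hxj; simp [Equiv.swap_apply_right, hvi]
            · by_cases hxi : x = i
              · subst hxi
                simp [Equiv.swap_apply_left, hvj1, hxj, le_refl, le_of_lt hij]
              · by_cases hxr : i ≤ x ∧ x ≤ j
                · have hx1 : i < x := lt_of_le_of_ne hxr.1 (fun h => hxi h.symm)
                  simp [Function.comp, Equiv.swap_apply_of_ne_of_ne hxi hxj, hxj, hxr,
                    hbet x hx1 hxr.2]
                · simp [Function.comp, Equiv.swap_apply_of_ne_of_ne hxi hxj, hxj, hxr]
          rw [sum_indicator_state _ vs htj, sum_indicator_state _ v hti]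
          exact coef_sum (pow_pos (div_pos hC hB) _)
        · have hvi1 : v.1 i = 1 := hbet i (le_refl i) hij
          have htj : v.1 = (fun x => if x = j then (2:Fin 3)
              else if i ≤ x ∧ x ≤ j then 1 else v.1 x) := by
            funext x
            by_cases hxj : x = j
            · subst hxj; simp [hvj]
            · by_cases hxr : i ≤ x ∧ x ≤ j
              · have hx2 : x < j := lt_of_le_of_ne hxr.2 hxj
                simp [hxj, hxr, hbet x hxr.1 hx2]
              · simp [hxj, hxr]
          have hti : vs.1 = (fun x => if x = i then (2:Fin 3)
              else if i ≤ x ∧ x ≤ j then 1 else v.1 x) := by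
            rw [hvs]; funext x
            by_cases hxi : x = i
            · subst hxi; simp [Equiv.swap_apply_left, hvj]
            · by_cases hxj : x = j
              · subst hxj
                simp [Equiv.swap_apply_right, hvi1, hxi, le_refl, le_of_lt hij]
              · by_cases hxr : i ≤ x ∧ x ≤ j
                · have hx2 : x < j := lt_of_le_of_ne hxr.2 hxj
                  simp [Function.comp, Equiv.swap_apply_of_ne_of_ne hxi hxj, hxi, hxr,
                    hbet x hxr.1 hx2]
                · simp [Function.comp, Equiv.swap_apply_of_ne_of_ne hxi hxj, hxi, hxr]
          rw [sum_indicator_state _ v htj, sum_indicator_state _ vs hti]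
          exact coef_sum (pow_pos (div_pos hC hB) _)
      · simp only [if_neg h3]
        simp

lemma jumpP_rowsum (a b c : ℕ) (hn : 2 ≤ a + b + c) (sA sB sC : ℝ)
    (h0 : 0 < sA) (hAB : sA < sB) (hBC : sB < sC)
    (v : PSpace (a+b+c) 3 ![a,b,c]) :
    ∑ u : PSpace (a+b+c) 3 ![a,b,c], jumpP a b c sA sB sC v u = 1 := by
  simp only [jumpP_eq]
  rw [← Finset.mul_sum, Finset.sum_comm]
  have : ∀ i : Fin (a+b+c),
      (∑ u : PSpace (a+b+c) 3 ![a,b,c], ∑ j : Fin (a+b+c), jumpTerm a b c sA sB sC v u i j)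
      = ∑ j : Fin (a+b+c), if i < j then (1:ℝ) else 0 := by
    intro i
    rw [Finset.sum_comm]
    exact Finset.sum_congr rfl fun j _ => jumpTerm_rowsum a b c sA sB sC h0 hAB hBC v i j
  simp only [this]
  rw [pair_count]
  rw [one_div, inv_mul_cancel₀]
  have : 0 < (a+b+c).choose 2 := Nat.choose_pos hn
  positivity

end RowSum
section Part

noncomputable def partTerm (n k : ℕ) (cnt : Fin k → ℕ) (s : Fin k → ℝ)
    (v u : PSpace n k cnt) (i j : Fin n) : ℝ :=
    if (j : ℕ) = (i : ℕ) + 1 then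
      if v.1 i = v.1 j then (if u = v then 1 else 0)
      else
        (s (v.1 i) / (s (v.1 i) + s (v.1 j))) *
          (if u.1 = v.1 ∘ Equiv.swap i j then 1 else 0)
        + (s (v.1 j) / (s (v.1 i) + s (v.1 j))) *
          (if u = v then 1 else 0)
    else 0

lemma partP_eq (n k : ℕ) (cnt : Fin k → ℕ) (s : Fin k → ℝ) (v u : PSpace n k cnt) :
    partP n k cnt s v u
      = (1 / ((n : ℝ) - 1)) * ∑ i : Fin n, ∑ j : Fin n, partTerm n k cnt s v u i j := rfl

lemma partTerm_db_aux {n k : ℕ} {cnt : Fin k → ℕ} {s : Fin k → ℝ}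
    (hs : ∀ t, 0 < s t) (v u : PSpace n k cnt) (i j : Fin n)
    (huv : u ≠ v) (hT : partTerm n k cnt s v u i j ≠ 0) :
    partW n k cnt s v * partTerm n k cnt s v u i j
      = partW n k cnt s u * partTerm n k cnt s u v i j := by
  by_cases hij : (j : ℕ) = (i : ℕ) + 1
  case neg =>
    unfold partTerm at hT
    rw [if_neg hij] at hT
    exact absurd rfl hT
  unfold partTerm at hT ⊢
  rw [if_pos hij] at hT
  rw [if_pos hij, if_pos hij]
  have hne : i ≠ j := fun h => by rw [h] at hij; omega
  by_cases hvv : v.1 i = v.1 j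
  · rw [if_pos hvv, if_neg huv] at hT; exact absurd rfl hT
  rw [if_neg hvv] at hT ⊢
  rw [if_neg huv] at hT ⊢
  by_cases hu : u.1 = v.1 ∘ Equiv.swap i j
  case neg => rw [if_neg hu] at hT; simp at hT
  rw [if_pos hu]
  have hui : u.1 i = v.1 j := by rw [hu]; simp
  have huj : u.1 j = v.1 i := by rw [hu]; simp
  have hout : ∀ x, x ≠ i → x ≠ j → u.1 x = v.1 x := fun x hxi hxj => by
    rw [hu]; simp [Equiv.swap_apply_of_ne_of_ne hxi hxj]
  have huu : ¬ (u.1 i = u.1 j) := by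
    rw [hui, huj]; exact fun h => hvv h.symm
  rw [if_neg huu, if_neg (fun h : v = u => huv h.symm)]
  have hvu : v.1 = u.1 ∘ Equiv.swap i j := by
    funext x
    by_cases hxi : x = i
    · subst hxi; simp [Equiv.swap_apply_left, huj]
    · by_cases hxj : x = j
      · subst hxj; simp [Equiv.swap_apply_right, hui]
      · simp [Equiv.swap_apply_of_ne_of_ne hxi hxj, hout x hxi hxj]
  rw [if_pos hvu]
  have hw := weight_swap (s := s) v u i j hne (fun l p1 p2 => (hout l p1 p2).symm)
  rw [hui, huj] at hw ⊢
  set p := s (v.1 i) with hp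
  set q := s (v.1 j) with hq
  have hppos : 0 < p := hs _
  have hqpos : 0 < q := hs _
  have e1 : p ^ ((j:ℕ)+1) = p ^ ((i:ℕ)+1) * p := by rw [hij, pow_succ]
  have e2 : q ^ ((j:ℕ)+1) = q ^ ((i:ℕ)+1) * q := by rw [hij, pow_succ]
  rw [e1, e2] at hw
  have hpq : partW n k cnt s v * p = partW n k cnt s u * q :=
    mul_right_cancel₀ (show p^((i:ℕ)+1) * q^((i:ℕ)+1) ≠ 0 by positivity)
      (by linear_combination hw)
  have hS : p + q ≠ 0 := by positivity
  rw [add_comm q p]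
  linear_combination (1/(p+q)) * hpq

lemma partTerm_db {n k : ℕ} {cnt : Fin k → ℕ} {s : Fin k → ℝ}
    (hs : ∀ t, 0 < s t) (v u : PSpace n k cnt) (i j : Fin n) :
    partW n k cnt s v * partTerm n k cnt s v u i j
      = partW n k cnt s u * partTerm n k cnt s u v i j := by
  by_cases huv : u = v
  · subst huv; rfl
  by_cases h1 : partTerm n k cnt s v u i j = 0
  · by_cases h2 : partTerm n k cnt s u v i j = 0
    · rw [h1, h2, mul_zero, mul_zero]
    · exact (partTerm_db_aux hs u v i j (fun h => huv h.symm) h2).symm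
  · exact partTerm_db_aux hs v u i j huv h1

lemma part_db {n k : ℕ} {cnt : Fin k → ℕ} {s : Fin k → ℝ}
    (hs : ∀ t, 0 < s t) (v u : PSpace n k cnt) :
    partW n k cnt s v * partP n k cnt s v u = partW n k cnt s u * partP n k cnt s u v := by
  rw [partP_eq, partP_eq, mul_left_comm, mul_left_comm (partW n k cnt s u)]
  congr 1
  rw [Finset.mul_sum, Finset.mul_sum]
  refine Finset.sum_congr rfl fun i _ => ?_
  rw [Finset.mul_sum, Finset.mul_sum]
  exact Finset.sum_congr rfl fun j _ => partTerm_db hs v u i j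

end Part

/-- The weight `w(v) = ∏_i s_{v(i)}^i` satisfies detailed balance
for the Jump/Hop chain `X_t(n)` on `Ω_{a,b,c}`; consequently `π = w/∑w` is a
probability distribution which is reversible (hence stationary) for `X_t(n)`, and it
coincides with the stationary distribution of the linear particle system `X₃(n)` on
the same state space, i.e. it is reversible (hence stationary) for `X₃(n)` as well. -/
theorem jumpHop_detailed_balance (a b c : ℕ) (hn : 2 ≤ a + b + c)
    (sA sB sC : ℝ) (h0 : 0 < sA) (hAB : sA < sB) (hBC : sB < sC) :
    (∀ v u : PSpace (a + b + c) 3 ![a, b, c],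
        partW (a + b + c) 3 ![a, b, c] ![sA, sB, sC] v * jumpP a b c sA sB sC v u =
          partW (a + b + c) 3 ![a, b, c] ![sA, sB, sC] u * jumpP a b c sA sB sC u v) ∧
    (∀ v : PSpace (a + b + c) 3 ![a, b, c],
        0 ≤ partPi (a + b + c) 3 ![a, b, c] ![sA, sB, sC] v) ∧
    (∑ v : PSpace (a + b + c) 3 ![a, b, c],
        partPi (a + b + c) 3 ![a, b, c] ![sA, sB, sC] v) = 1 ∧
    (∀ v u : PSpace (a + b + c) 3 ![a, b, c],
        partPi (a + b + c) 3 ![a, b, c] ![sA, sB, sC] v * jumpP a b c sA sB sC v u =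
          partPi (a + b + c) 3 ![a, b, c] ![sA, sB, sC] u * jumpP a b c sA sB sC u v) ∧
    (∀ u : PSpace (a + b + c) 3 ![a, b, c],
        ∑ v : PSpace (a + b + c) 3 ![a, b, c],
          partPi (a + b + c) 3 ![a, b, c] ![sA, sB, sC] v * jumpP a b c sA sB sC v u =
          partPi (a + b + c) 3 ![a, b, c] ![sA, sB, sC] u) ∧
    (∀ v u : PSpace (a + b + c) 3 ![a, b, c],
        partPi (a + b + c) 3 ![a, b, c] ![sA, sB, sC] v *
            partP (a + b + c) 3 ![a, b, c] ![sA, sB, sC] v u =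
          partPi (a + b + c) 3 ![a, b, c] ![sA, sB, sC] u *
            partP (a + b + c) 3 ![a, b, c] ![sA, sB, sC] u v) := by
  have hs : ∀ t : Fin 3, 0 < (![sA,sB,sC]) t := by
    intro t; fin_cases t
    · exact h0
    · exact h0.trans hAB
    · exact (h0.trans hAB).trans hBC
  have hW : ∀ v : PSpace (a+b+c) 3 ![a,b,c],
      0 < partW (a+b+c) 3 ![a,b,c] ![sA,sB,sC] v := fun v => partW_pos hs v
  have hNE : Nonempty (PSpace (a+b+c) 3 ![a,b,c]) := pspace_nonempty a b c
  have hSpos : 0 < ∑ u : PSpace (a+b+c) 3 ![a,b,c], partW (a+b+c) 3 ![a,b,c] ![sA,sB,sC] u :=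
    Finset.sum_pos (fun u _ => hW u) Finset.univ_nonempty
  have hDB : ∀ v u : PSpace (a + b + c) 3 ![a, b, c],
      partW (a + b + c) 3 ![a, b, c] ![sA, sB, sC] v * jumpP a b c sA sB sC v u =
        partW (a + b + c) 3 ![a, b, c] ![sA, sB, sC] u * jumpP a b c sA sB sC u v :=
    jump_db a b c sA sB sC h0 hAB hBC
  have hpiDB : ∀ v u : PSpace (a + b + c) 3 ![a, b, c],
      partPi (a + b + c) 3 ![a, b, c] ![sA, sB, sC] v * jumpP a b c sA sB sC v u =
        partPi (a + b + c) 3 ![a, b, c] ![sA, sB, sC] u * jumpP a b c sA sB sC u v := by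
    intro v u
    unfold partPi
    rw [div_mul_eq_mul_div, div_mul_eq_mul_div, hDB v u]
  refine ⟨hDB, ?_, ?_, hpiDB, ?_, ?_⟩
  · intro v
    unfold partPi
    exact div_nonneg (hW v).le hSpos.le
  · unfold partPi
    rw [← Finset.sum_div, div_self hSpos.ne']
  · intro u
    calc (∑ v : PSpace (a + b + c) 3 ![a, b, c],
          partPi (a + b + c) 3 ![a, b, c] ![sA, sB, sC] v * jumpP a b c sA sB sC v u)
        = ∑ v : PSpace (a + b + c) 3 ![a, b, c],
          partPi (a + b + c) 3 ![a, b, c] ![sA, sB, sC] u * jumpP a b c sA sB sC u v :=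
          Finset.sum_congr rfl fun v _ => hpiDB v u
      _ = partPi (a + b + c) 3 ![a, b, c] ![sA, sB, sC] u *
            ∑ v : PSpace (a + b + c) 3 ![a, b, c], jumpP a b c sA sB sC u v := by
          rw [Finset.mul_sum]
      _ = partPi (a + b + c) 3 ![a, b, c] ![sA, sB, sC] u := by
          rw [jumpP_rowsum a b c hn sA sB sC h0 hAB hBC u, mul_one]
  · intro v u
    unfold partPi
    rw [div_mul_eq_mul_div, div_mul_eq_mul_div, part_db hs v u]
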